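/- In the power series ring F₂[T][[X]], the identity Σ_{k ≥ 0} c_k X^k = X / ((1 - X - T·X²)(1 - T·X²)) holds, where c_k = Σ_{0 ≤ j < k/2} C(k - j, j) · T^j (binomial coefficients reduced mod 2), i.e., c_k is the sum over j with 2j < k of C(k-j, j) T^j in F₂[T]. -/

import Mathlib

open Finset PowerSeries

noncomputable def aa (k : ℕ) : Polynomial (ZMod 2) :=
  ∑ j ∈ Finset.range (k+1), Polynomial.C ((Nat.choose (k - j) j : ZMod 2)) * Polynomial.X ^ j

noncomputable def bb (k : ℕ) : Polynomial (ZMod 2) :=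
  if Even k then Polynomial.X ^ (k / 2) else 0

lemma aa_rec (n : ℕ) : aa (n+2) = aa (n+1) + Polynomial.X * aa n := by
  have hL : aa (n+2)
      = (∑ j ∈ Finset.range (n+1),
          Polynomial.C ((Nat.choose (n+1-j) (j+1) : ZMod 2)) * Polynomial.X ^ (j+1)) + 1 := by
    rw [aa, Finset.sum_range_succ' _ (n+2)]
    congr 1
    · rw [Finset.sum_range_succ]
      have h0 : (n + 2 - (n + 1 + 1)).choose (n + 1 + 1) = 0 := by simp
      rw [h0]
      simp only [Nat.cast_zero, map_zero, zero_mul, add_zero]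
      apply Finset.sum_congr rfl
      intro j hj
      have h1 : n + 2 - (j + 1) = n + 1 - j := by omega
      rw [h1]
    · simp
  have hR : aa (n+1)
      = (∑ j ∈ Finset.range (n+1),
          Polynomial.C ((Nat.choose (n-j) (j+1) : ZMod 2)) * Polynomial.X ^ (j+1)) + 1 := by
    rw [aa, Finset.sum_range_succ' _ (n+1)]
    congr 1
    · apply Finset.sum_congr rfl
      intro j hj
      have h1 : n + 1 - (j + 1) = n - j := by omega
      rw [h1]
    · simp
  have hX : Polynomial.X * aa n
      = ∑ j ∈ Finset.range (n+1),
          Polynomial.X * (Polynomial.C ((Nat.choose (n-j) j : ZMod 2)) * Polynomial.X ^ j) := by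
    rw [aa, Finset.mul_sum]
  have key : ∀ j ∈ Finset.range (n+1),
      Polynomial.C ((Nat.choose (n+1-j) (j+1) : ZMod 2)) * Polynomial.X ^ (j+1)
        = Polynomial.C ((Nat.choose (n-j) (j+1) : ZMod 2)) * Polynomial.X ^ (j+1)
          + Polynomial.X * (Polynomial.C ((Nat.choose (n-j) j : ZMod 2)) * Polynomial.X ^ j) := by
    intro j hj
    have hj' : j ≤ n := by simpa [Nat.lt_succ_iff] using hj
    have h1 : n + 1 - j = (n - j) + 1 := by omega
    rw [h1, Nat.choose_succ_succ, Nat.cast_add, map_add, add_mul]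
    ring
  rw [hL, hR, hX, Finset.sum_congr rfl key, Finset.sum_add_distrib]
  ring

lemma A_mul : (PowerSeries.mk aa) * (1 - PowerSeries.X - PowerSeries.C (R := Polynomial (ZMod 2)) Polynomial.X * PowerSeries.X ^ 2) = 1 := by
  ext n
  rw [mul_sub, mul_sub, mul_one, mul_left_comm, map_sub, map_sub, coeff_mk,
    PowerSeries.coeff_C_mul, PowerSeries.coeff_mul_X_pow', PowerSeries.coeff_one]
  rcases n with _ | _ | n
  · simp [aa]
  · rw [PowerSeries.coeff_succ_mul_X, coeff_mk]
    simp [aa, Finset.sum_range_succ]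
  · rw [PowerSeries.coeff_succ_mul_X, coeff_mk, if_pos (by omega : 2 ≤ n + 1 + 1)]
    have : n + 1 + 1 - 2 = n := by omega
    rw [this, coeff_mk, if_neg (by omega), aa_rec]
    ring

lemma B_mul : (PowerSeries.mk bb) * (1 - PowerSeries.C (R := Polynomial (ZMod 2)) Polynomial.X * PowerSeries.X ^ 2) = 1 := by
  ext n
  rw [mul_sub, mul_one, mul_left_comm, map_sub, coeff_mk,
    PowerSeries.coeff_C_mul, PowerSeries.coeff_mul_X_pow', PowerSeries.coeff_one]
  rcases n with _ | _ | n
  · simp [bb]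
  · simp [bb]
  · rw [if_pos (by omega : 2 ≤ n + 1 + 1)]
    have h2 : n + 1 + 1 - 2 = n := by omega
    rw [h2, coeff_mk, if_neg (by omega)]
    by_cases h : Even n
    · obtain ⟨m, hm⟩ := h
      have hev : Even (n + 1 + 1) := ⟨m + 1, by omega⟩
      rw [bb, bb, if_pos hev, if_pos ⟨m, hm⟩]
      have hd : (n + 1 + 1) / 2 = n / 2 + 1 := by omega
      rw [hd, pow_succ]
      ring
    · have hodd : ¬ Even (n + 1 + 1) := by
        rintro ⟨m, hm⟩
        exact h ⟨m - 1, by omega⟩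
      rw [bb, bb, if_neg hodd, if_neg h]
      ring

lemma aux_tail (k : ℕ) :
    ∑ j ∈ (Finset.range (k+1)).filter (fun j => ¬ 2 * j < k),
      Polynomial.C ((Nat.choose (k - j) j : ZMod 2)) * Polynomial.X ^ j = bb k := by
  rcases Nat.even_or_odd k with hk | hk
  · obtain ⟨m, hm⟩ := hk
    rw [Finset.sum_eq_single_of_mem m]
    · have h1 : k - m = m := by omega
      rw [h1, Nat.choose_self, Nat.cast_one, map_one, one_mul, bb,
        if_pos ⟨m, hm⟩]
      congr 1
      omega
    · simp only [Finset.mem_filter, Finset.mem_range]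
      constructor <;> omega
    · intro j hj hne
      simp only [Finset.mem_filter, Finset.mem_range] at hj
      have : k - j < j := by omega
      rw [Nat.choose_eq_zero_of_lt this, Nat.cast_zero, map_zero, zero_mul]
  · obtain ⟨t, ht⟩ := hk
    rw [Finset.sum_eq_zero, bb, if_neg]
    · rintro ⟨m, hm⟩
      omega
    · intro j hj
      simp only [Finset.mem_filter, Finset.mem_range] at hj
      have : k - j < j := by omega
      rw [Nat.choose_eq_zero_of_lt this, Nat.cast_zero, map_zero, zero_mul]

lemma aa_split (k : ℕ) :
    aa k = (∑ j ∈ (Finset.range k).filter (fun j => 2 * j < k),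
      Polynomial.C ((Nat.choose (k - j) j : ZMod 2)) * Polynomial.X ^ j) + bb k := by
  have hfilter : (Finset.range (k+1)).filter (fun j => 2 * j < k)
      = (Finset.range k).filter (fun j => 2 * j < k) := by
    ext j
    simp only [Finset.mem_filter, Finset.mem_range]
    omega
  rw [aa, ← Finset.sum_filter_add_sum_filter_not (Finset.range (k+1)) (fun j => 2*j < k),
    hfilter, aux_tail]

/-- In `F₂[T][[X]]`, we have `∑_{k ≥ 0} c_k X^k = X / ((1 - X - T X²)(1 - T X²))`, where
`c_k = ∑_{0 ≤ j, 2j < k} C(k - j, j) T^j ∈ F₂[T]`. Stated multiplied through by the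
(invertible, constant term `1`) denominator. -/
theorem stmt11 :
    (PowerSeries.mk (fun k => ∑ j ∈ (Finset.range k).filter (fun j => 2 * j < k),
        Polynomial.C ((Nat.choose (k - j) j : ZMod 2)) * Polynomial.X ^ j) :
      PowerSeries (Polynomial (ZMod 2))) *
      ((1 - PowerSeries.X - PowerSeries.C (R := Polynomial (ZMod 2)) Polynomial.X *
          PowerSeries.X ^ 2) *
        (1 - PowerSeries.C (R := Polynomial (ZMod 2)) Polynomial.X * PowerSeries.X ^ 2))
      = PowerSeries.X := by
  have hc : (PowerSeries.mk (fun k => ∑ j ∈ (Finset.range k).filter (fun j => 2 * j < k),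
        Polynomial.C ((Nat.choose (k - j) j : ZMod 2)) * Polynomial.X ^ j) :
      PowerSeries (Polynomial (ZMod 2))) = PowerSeries.mk aa - PowerSeries.mk bb := by
    ext k
    rw [map_sub, coeff_mk, coeff_mk, coeff_mk, aa_split, add_sub_cancel_right]
  rw [hc]
  have h1 := A_mul
  have h2 := B_mul
  set D1 : PowerSeries (Polynomial (ZMod 2)) :=
    1 - PowerSeries.X - PowerSeries.C (R := Polynomial (ZMod 2)) Polynomial.X * PowerSeries.X ^ 2
  set D2 : PowerSeries (Polynomial (ZMod 2)) :=
    1 - PowerSeries.C (R := Polynomial (ZMod 2)) Polynomial.X * PowerSeries.X ^ 2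
  have : (PowerSeries.mk aa - PowerSeries.mk bb) * (D1 * D2)
      = (PowerSeries.mk aa * D1) * D2 - (PowerSeries.mk bb * D2) * D1 := by ring
  rw [this, h1, h2, one_mul, one_mul]
  show D2 - D1 = PowerSeries.X
  rw [sub_sub_sub_cancel_right]
  ring
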